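/- For κ ∈ I_n define η(κ) : {1,…,n} → {1,…,n} by η(κ)(i) := ((n,κ(n))∘(n−1,κ(n−1))∘⋯∘(i,κ(i)))(i), where the composition applies (i,κ(i)) first. Then η(κ) ∈ I_n for every κ ∈ I_n (i.e. i ≤ η(κ)(i) for all i), and the map κ ↦ η(κ) is a bijection from I_n to itself. -/

import Mathlib

/-!
STATEMENT 15: For κ ∈ I_n define η(κ)(i) := ((n,κ(n))∘⋯∘(i,κ(i)))(i).
Then η(κ) ∈ I_n for every κ ∈ I_n, and κ ↦ η(κ) is a bijection from I_n
to itself.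
-/

/-- q_κ^{[i]} = (n,κ(n))∘(n−1,κ(n−1))∘⋯∘(i,κ(i)), rightmost factor applied first. -/
def qk {n : ℕ} (κ : Fin n → Fin n) (i : Fin n) : Equiv.Perm (Fin n) :=
  ((((List.finRange n).filter (fun j => decide (i ≤ j))).reverse).map
    (fun j => Equiv.swap j (κ j))).prod

/-- η(κ)(i) = ((n,κ(n))∘⋯∘(i,κ(i)))(i). -/
def etaMap {n : ℕ} (κ : Fin n → Fin n) : Fin n → Fin n :=
  fun i => qk κ i i

/-- The partial product over indices strictly greater than `i`. -/
def pk {n : ℕ} (κ : Fin n → Fin n) (i : Fin n) : Equiv.Perm (Fin n) :=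
  ((((List.finRange n).filter (fun j => decide (i < j))).reverse).map
    (fun j => Equiv.swap j (κ j))).prod

lemma filter_le_sorted {α : Type*} [LinearOrder α] :
    ∀ (l : List α), l.Pairwise (· < ·) → ∀ i ∈ l,
      l.filter (fun j => decide (i ≤ j)) = i :: l.filter (fun j => decide (i < j)) := by
  intro l hl i hi
  induction l with
  | nil => simp at hi
  | cons a tl ih =>
    rcases List.pairwise_cons.mp hl with ⟨ha, htl⟩
    rcases List.mem_cons.mp hi with rfl | hi
    · have h1 : tl.filter (fun j => decide (i ≤ j)) = tl :=
        List.filter_eq_self.mpr (fun b hb => by simp [(ha b hb).le])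
      have h2 : tl.filter (fun j => decide (i < j)) = tl :=
        List.filter_eq_self.mpr (fun b hb => by simp [ha b hb])
      simp [List.filter_cons, h1, h2]
    · have hai : a < i := ha i hi
      simp only [List.filter_cons, decide_eq_true_eq, if_neg (not_le.mpr hai),
        if_neg (not_lt.mpr hai.le)]
      exact ih htl hi

lemma qk_split {n : ℕ} (κ : Fin n → Fin n) (i : Fin n) :
    qk κ i = pk κ i * Equiv.swap i (κ i) := by
  unfold qk pk
  rw [filter_le_sorted (List.finRange n) (List.pairwise_lt_finRange n) i
    (List.mem_finRange i)]
  simp [List.reverse_cons]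

lemma prod_fixes {α : Type*} (L : List (Equiv.Perm α)) (x : α)
    (h : ∀ p ∈ L, p x = x) : L.prod x = x := by
  induction L with
  | nil => simp
  | cons p L ih =>
    simp only [List.prod_cons, Equiv.Perm.mul_apply]
    rw [ih (fun q hq => h q (List.mem_cons_of_mem _ hq)), h p (List.mem_cons_self (a := p) (l := L))]

lemma pk_fixes {n : ℕ} (κ : Fin n → Fin n) (hκ : ∀ i, i ≤ κ i) (i x : Fin n)
    (hx : x ≤ i) : pk κ i x = x := by
  apply prod_fixes
  intro p hp
  rcases List.mem_map.mp hp with ⟨j, hj, rfl⟩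
  have hij : i < j := by
    have := List.mem_filter.mp (List.mem_reverse.mp hj) |>.2
    simpa using this
  have h1 : x ≠ j := ne_of_lt (lt_of_le_of_lt hx hij)
  have h2 : x ≠ κ j := ne_of_lt (lt_of_le_of_lt hx (lt_of_lt_of_le hij (hκ j)))
  exact Equiv.swap_apply_of_ne_of_ne h1 h2

lemma pk_gt {n : ℕ} (κ : Fin n → Fin n) (hκ : ∀ i, i ≤ κ i) (i x : Fin n)
    (hx : i < x) : i < pk κ i x := by
  by_contra h
  push_neg at h
  have h2 : pk κ i (pk κ i x) = pk κ i x := pk_fixes κ hκ i _ h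
  have hxx : pk κ i x = x := (pk κ i).injective h2
  exact absurd (hxx ▸ h) (not_le.mpr hx)

lemma etaMap_eq {n : ℕ} (κ : Fin n → Fin n) (i : Fin n) :
    etaMap κ i = pk κ i (κ i) := by
  unfold etaMap
  rw [qk_split]
  simp [Equiv.swap_apply_left]

lemma pk_congr {n : ℕ} (κ κ' : Fin n → Fin n) (i : Fin n)
    (h : ∀ j, i < j → κ j = κ' j) : pk κ i = pk κ' i := by
  unfold pk
  congr 1
  apply List.map_congr_left
  intro j hj
  have hij : i < j := by
    have := List.mem_filter.mp (List.mem_reverse.mp hj) |>.2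
    simpa using this
  rw [h j hij]

lemma etaMap_le {n : ℕ} (κ : Fin n → Fin n) (hκ : ∀ i, i ≤ κ i) (i : Fin n) :
    i ≤ etaMap κ i := by
  rw [etaMap_eq]
  rcases eq_or_lt_of_le (hκ i) with h | h
  · rw [← h, pk_fixes κ hκ i i le_rfl]
  · exact (pk_gt κ hκ i (κ i) h).le

theorem etaMap_mem_and_bijOn (n : ℕ) :
    (∀ κ : Fin n → Fin n, (∀ i, i ≤ κ i) → ∀ i, i ≤ etaMap κ i) ∧
    Set.BijOn etaMap {κ : Fin n → Fin n | ∀ i, i ≤ κ i}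
      {η : Fin n → Fin n | ∀ i, i ≤ η i} := by
  refine ⟨fun κ hκ i => etaMap_le κ hκ i, ?_⟩
  have hmaps : Set.MapsTo etaMap {κ : Fin n → Fin n | ∀ i, i ≤ κ i}
      {η : Fin n → Fin n | ∀ i, i ≤ η i} := fun κ hκ i => etaMap_le κ hκ i
  have hinj : Set.InjOn etaMap {κ : Fin n → Fin n | ∀ i, i ≤ κ i} := by
    intro κ hκ κ' hκ' heq
    have key : ∀ k : ℕ, ∀ i : Fin n, n - i.val ≤ k → κ i = κ' i := by
      intro k
      induction k with
      | zero => intro i h; omega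
      | succ k ih =>
        intro i _
        have hprev : ∀ j, i < j → κ j = κ' j := by
          intro j hj
          apply ih
          have : i.val < j.val := hj
          omega
        have hp : pk κ i = pk κ' i := pk_congr κ κ' i hprev
        have h1 : pk κ i (κ i) = pk κ i (κ' i) := by
          rw [← etaMap_eq, heq, etaMap_eq, hp]
        exact (pk κ i).injective h1
    funext i
    exact key (n - i.val) i le_rfl
  exact ((Set.toFinite _).injOn_iff_bijOn_of_mapsTo hmaps).mp hinj
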